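/- Let V(x) = x⁴/4 − κx²/2, ν = e^{-V}dx/Z, J u = −V'u + u', and suppose ‖Ju‖_{L²(ν)} ≤ c‖u‖_{H¹(ν)} for all u ∈ H¹(ν), where ‖u‖²_{H¹(ν)} = ∫(u')²dν + (∫u dν)² and C_P is a Poincaré constant. Then for all u ∈ H¹(ν), ‖e^{-V/2}u‖_∞ ≤ √(Z(c+1))·max(1, C_P)^{1/4}·‖u‖_{H¹(ν)}. -/

import Mathlib

open MeasureTheory Real

/-- Membership in the weighted Sobolev space `H¹(ν)`. -/
def H1mem (ν : Measure ℝ) (u : ℝ → ℝ) : Prop :=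
  Differentiable ℝ u ∧ MemLp u 2 ν ∧ MemLp (deriv u) 2 ν

namespace WeightedSup

lemma exists_small {g : ℝ → ℝ} (hint : Integrable g (volume : Measure ℝ))
    {ε : ℝ} (hε : 0 < ε) (M : ℝ) : ∃ y, y ≤ M ∧ g y < ε := by
  by_contra hcon
  push_neg at hcon
  have hc : Integrable (fun _ : ℝ => ε) (volume.restrict (Set.Iic M)) := by
    refine hint.integrableOn.mono' aestronglyMeasurable_const ?_
    refine (ae_restrict_iff' measurableSet_Iic).2 (Filter.Eventually.of_forall fun y hy => ?_)
    have := hcon y hy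
    rw [Real.norm_eq_abs, abs_of_pos hε]
    linarith
  rw [integrable_const_iff] at hc
  rcases hc with h | h
  · exact hε.ne' h
  · rw [isFiniteMeasure_restrict, Real.volume_Iic] at h
    exact h rfl

lemma sup_bound {g g' : ℝ → ℝ} (hd : ∀ x, HasDerivAt g (g' x) x)
    (hgint : Integrable g (volume : Measure ℝ)) (hg'int : Integrable g' volume) (x : ℝ) :
    g x ≤ ∫ y, |g' y| := by
  refine le_of_forall_pos_le_add fun ε hε => ?_
  obtain ⟨y, hyx, hgy⟩ := exists_small hgint hε x
  have hftc : ∫ t in y..x, g' t = g x - g y :=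
    intervalIntegral.integral_eq_sub_of_hasDerivAt (fun t _ => hd t) hg'int.intervalIntegrable
  have h1 : ∫ t in y..x, g' t ≤ ∫ t in y..x, |g' t| :=
    intervalIntegral.integral_mono_on hyx hg'int.intervalIntegrable
      hg'int.abs.intervalIntegrable (fun t _ => le_abs_self _)
  have h2 : ∫ t in y..x, |g' t| ≤ ∫ y, |g' y| := by
    rw [intervalIntegral.integral_of_le hyx]
    exact setIntegral_le_integral hg'int.abs
      (Filter.Eventually.of_forall fun t => abs_nonneg _)
  linarith

lemma cs {ν : Measure ℝ} {f g : ℝ → ℝ} (hf : MemLp f 2 ν) (hg : MemLp g 2 ν) :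
    ∫ x, |f x| * |g x| ∂ν ≤ Real.sqrt (∫ x, f x ^ 2 ∂ν) * Real.sqrt (∫ x, g x ^ 2 ∂ν) := by
  have hconj : (2:ℝ).HolderConjugate 2 := Real.HolderConjugate.two_two
  have h := integral_mul_norm_le_Lp_mul_Lq hconj
    (by simpa using hf) (by simpa using hg)
  have e1 : ∀ h : ℝ → ℝ, ∫ x, ‖h x‖ ^ (2:ℝ) ∂ν = ∫ x, h x ^ 2 ∂ν := by
    intro h
    refine integral_congr_ae (Filter.Eventually.of_forall fun x => ?_)
    show ‖h x‖ ^ (2:ℝ) = h x ^ 2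
    rw [show (2:ℝ) = ((2:ℕ):ℝ) by norm_num, Real.rpow_natCast, Real.norm_eq_abs, sq_abs]
  rw [e1, e1, ← Real.sqrt_eq_rpow, ← Real.sqrt_eq_rpow] at h
  simpa [Real.norm_eq_abs] using h

lemma smul_eq_dens {ρ : ℝ → ℝ} {Z : ℝ} (hρ : ∀ x, 0 ≤ ρ x) (hZ : 0 < Z) (f : ℝ → ℝ) (x : ℝ) :
    (ρ x / Z).toNNReal • f x = ρ x / Z * f x := by
  rw [NNReal.smul_def, Real.coe_toNNReal _ (div_nonneg (hρ x) hZ.le), smul_eq_mul]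

lemma integral_dens {ρ : ℝ → ℝ} {Z : ℝ} (hmeas : Measurable ρ) (hρ : ∀ x, 0 ≤ ρ x)
    (hZ : 0 < Z) (f : ℝ → ℝ) :
    ∫ x, f x ∂((volume : Measure ℝ).withDensity fun x => ENNReal.ofReal (ρ x / Z)) =
      ∫ x, (ρ x / Z) * f x := by
  rw [show (fun x => ENNReal.ofReal (ρ x / Z))
      = fun x => (((ρ x / Z).toNNReal : NNReal) : ENNReal) from rfl,
    integral_withDensity_eq_integral_smul ((hmeas.div_const Z).real_toNNReal) f]
  exact integral_congr_ae (Filter.Eventually.of_forall fun x => smul_eq_dens hρ hZ f x)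

lemma integrable_dens {ρ : ℝ → ℝ} {Z : ℝ} (hmeas : Measurable ρ) (hρ : ∀ x, 0 ≤ ρ x)
    (hZ : 0 < Z) (f : ℝ → ℝ) :
    Integrable f ((volume : Measure ℝ).withDensity fun x => ENNReal.ofReal (ρ x / Z)) ↔
      Integrable (fun x => (ρ x / Z) * f x) volume := by
  rw [show (fun x => ENNReal.ofReal (ρ x / Z))
      = fun x => (((ρ x / Z).toNNReal : NNReal) : ENNReal) from rfl,
    integrable_withDensity_iff_integrable_smul ((hmeas.div_const Z).real_toNNReal)]
  exact integrable_congr (Filter.Eventually.of_forall fun x => smul_eq_dens hρ hZ f x)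

lemma loc_l1 {ρ u' : ℝ → ℝ} (hρcont : Continuous ρ) (hρpos : ∀ t, 0 < ρ t)
    (hmeas : Measurable u') (h : Integrable (fun t => ρ t * u' t ^ 2) volume) (a b : ℝ) :
    IntervalIntegrable u' volume a b := by
  rw [intervalIntegrable_iff']
  obtain ⟨t₀, ht₀mem, ht₀⟩ := isCompact_uIcc.exists_isMinOn Set.nonempty_uIcc
    hρcont.continuousOn
  have hδ : 0 < ρ t₀ := hρpos t₀
  have hsq : IntegrableOn (fun t => u' t ^ 2) (Set.uIcc a b) volume := by
    refine Integrable.mono' ((h.integrableOn).const_mul (1 / ρ t₀))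
      ((hmeas.pow_const 2).aestronglyMeasurable.restrict) ?_
    refine (ae_restrict_iff' measurableSet_uIcc).2 (Filter.Eventually.of_forall fun t ht => ?_)
    have h1 : ρ t₀ ≤ ρ t := ht₀ ht
    have h2 : (0:ℝ) ≤ u' t ^ 2 := sq_nonneg _
    rw [Real.norm_eq_abs, abs_of_nonneg h2]
    calc u' t ^ 2 = 1 / ρ t₀ * (ρ t₀ * u' t ^ 2) := by field_simp
    _ ≤ 1 / ρ t₀ * (ρ t * u' t ^ 2) := by
        exact mul_le_mul_of_nonneg_left (mul_le_mul_of_nonneg_right h1 h2) (by positivity)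
  have hconst : IntegrableOn (fun _ : ℝ => (1:ℝ)) (Set.uIcc a b) volume :=
    integrableOn_const isCompact_uIcc.measure_lt_top.ne
  have hmaj : IntegrableOn (fun t => 1 + u' t ^ 2) (Set.uIcc a b) volume := hconst.add hsq
  refine Integrable.mono' hmaj hmeas.aestronglyMeasurable.restrict
    (Filter.Eventually.of_forall fun t => ?_)
  rw [Real.norm_eq_abs]
  nlinarith [sq_abs (u' t), sq_nonneg (|u' t| - 1), abs_nonneg (u' t)]

lemma polybound (κ x : ℝ) :
    3*x^2 - κ ≤ (1/2)*(x^3 - κ*x)^2 + (|κ| + 3*(|κ|+3)^2) := by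
  have hκ0 : 0 ≤ |κ| := abs_nonneg κ
  rcases le_or_gt (|x|) (|κ|+3) with hx | hx
  · have h1 : x^2 ≤ (|κ|+3)^2 := by
      rw [← sq_abs x]; exact pow_le_pow_left₀ (abs_nonneg x) hx 2
    nlinarith [sq_nonneg (x^3 - κ*x), neg_abs_le κ, le_abs_self κ]
  · have h1 : (|κ|+3)^2 ≤ x^2 := by
      rw [← sq_abs x]; exact pow_le_pow_left₀ (by linarith) hx.le 2
    have h2 : 2*|κ| ≤ x^2 := by nlinarith
    have h9 : 9 ≤ x^2 := by nlinarith
    have hfac : x^2/2 ≤ x^2 - κ := by linarith [le_abs_self κ]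
    have hsq : (x^2/2)^2 ≤ (x^2-κ)^2 := pow_le_pow_left₀ (by positivity) hfac 2
    have hkey : (x^2) * (x^2/2)^2 ≤ (x^3 - κ*x)^2 := by
      have h : (x^3 - κ*x)^2 = x^2 * (x^2-κ)^2 := by ring
      rw [h]; exact mul_le_mul_of_nonneg_left hsq (sq_nonneg x)
    nlinarith [sq_nonneg x, h9, hkey, neg_abs_le κ, le_abs_self κ]

lemma rho_hasDeriv (κ t : ℝ) : HasDerivAt (fun y : ℝ => Real.exp (-(y^4/4 - κ*y^2/2)))
    (Real.exp (-(t^4/4 - κ*t^2/2)) * (-(t^3 - κ*t))) t := by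
  have h := ((((hasDerivAt_pow 4 t).div_const 4).sub
    (((hasDerivAt_pow 2 t).const_mul κ).div_const 2)).neg).exp
  convert h using 1
  · rfl
  · simp only [Pi.neg_apply, Pi.sub_apply]; push_cast; ring

lemma key_integrable (κ : ℝ) (u : ℝ → ℝ) (hud : Differentiable ℝ u)
    (hρu2 : Integrable (fun t => Real.exp (-(t^4/4 - κ*t^2/2)) * u t^2) volume)
    (hρu'2 : Integrable (fun t => Real.exp (-(t^4/4 - κ*t^2/2)) * (deriv u t)^2) volume)
    (hu'loc : ∀ a b : ℝ, IntervalIntegrable (deriv u) volume a b) :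
    Integrable (fun t => Real.exp (-(t^4/4 - κ*t^2/2)) * ((t^3 - κ*t) * u t)^2) volume := by
  have hucont : Continuous u := hud.continuous
  set C₁ : ℝ := |κ| + 3*(|κ|+3)^2 with hC₁
  have hC₁0 : 0 ≤ C₁ := by positivity
  have hρd := rho_hasDeriv κ
  -- derivative of F
  have hFd : ∀ t : ℝ, HasDerivAt
      (fun y : ℝ => (y^3 - κ*y) * u y^2 * Real.exp (-(y^4/4 - κ*y^2/2)))
      (((3*t^2 - κ) * u t^2 + 2*(t^3 - κ*t)*u t*deriv u t
        - (t^3 - κ*t)^2*u t^2) * Real.exp (-(t^4/4 - κ*t^2/2))) t := by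
    intro t
    have hW : HasDerivAt (fun y : ℝ => y^3 - κ*y) (3*t^2 - κ) t := by
      have h := (hasDerivAt_pow 3 t).sub ((hasDerivAt_id t).const_mul κ)
      refine h.congr_deriv ?_
      push_cast; ring
    have h1 := (hW.mul ((hud t).hasDerivAt.pow 2)).mul (hρd t)
    refine h1.congr_deriv ?_
    simp only [Pi.mul_apply, Pi.pow_apply]; push_cast; ring
  -- interval integrability of F'
  have hF'ii : ∀ a b : ℝ, IntervalIntegrable
      (fun t => ((3*t^2 - κ) * u t^2 + 2*(t^3 - κ*t)*u t*deriv u t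
        - (t^3 - κ*t)^2*u t^2) * Real.exp (-(t^4/4 - κ*t^2/2))) volume a b := by
    intro a b
    have hcont : Continuous (fun t : ℝ => ((3*t^2 - κ) * u t^2
        - (t^3 - κ*t)^2*u t^2) * Real.exp (-(t^4/4 - κ*t^2/2))) := by fun_prop
    have h2 : IntervalIntegrable
        (fun t => deriv u t * (2*(t^3 - κ*t)*u t * Real.exp (-(t^4/4 - κ*t^2/2))))
        volume a b :=
      (hu'loc a b).mul_continuousOn (by fun_prop : Continuous
        (fun t : ℝ => 2*(t^3 - κ*t)*u t * Real.exp (-(t^4/4 - κ*t^2/2)))).continuousOn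
    have h3 := (hcont.intervalIntegrable a b).add h2
    have heq : (fun t : ℝ => ((3*t^2 - κ) * u t^2
        - (t^3 - κ*t)^2*u t^2) * Real.exp (-(t^4/4 - κ*t^2/2))
        + deriv u t * (2*(t^3 - κ*t)*u t * Real.exp (-(t^4/4 - κ*t^2/2))))
        = (fun t => ((3*t^2 - κ) * u t^2 + 2*(t^3 - κ*t)*u t*deriv u t
        - (t^3 - κ*t)^2*u t^2) * Real.exp (-(t^4/4 - κ*t^2/2))) := by
      funext t; ring
    exact heq ▸ h3
  -- integrable majorant
  have hBint : Integrable (fun t => (C₁*u t^2 + 4*(deriv u t)^2)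
      * Real.exp (-(t^4/4 - κ*t^2/2))) volume := by
    refine ((hρu2.const_mul C₁).add (hρu'2.const_mul 4)).congr
      (Filter.Eventually.of_forall fun t => ?_)
    simp only [Pi.add_apply]
    ring
  set B : ℝ := ∫ t, (C₁*u t^2 + 4*(deriv u t)^2) * Real.exp (-(t^4/4 - κ*t^2/2)) with hB
  -- pointwise bound
  have hpt : ∀ t : ℝ, Real.exp (-(t^4/4 - κ*t^2/2)) * ((t^3 - κ*t) * u t)^2 ≤
      4*((C₁*u t^2 + 4*(deriv u t)^2) * Real.exp (-(t^4/4 - κ*t^2/2))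
        - ((3*t^2 - κ) * u t^2 + 2*(t^3 - κ*t)*u t*deriv u t
          - (t^3 - κ*t)^2*u t^2) * Real.exp (-(t^4/4 - κ*t^2/2))) := by
    intro t
    have h1 := mul_le_mul_of_nonneg_right (polybound κ t) (sq_nonneg (u t))
    have h2 : 2*((t^3-κ*t)*u t*deriv u t) ≤ (1/4)*((t^3-κ*t)*u t)^2 + 4*(deriv u t)^2 := by
      nlinarith [sq_nonneg ((t^3-κ*t)*u t/2 - 2*deriv u t)]
    have h3 : (0:ℝ) ≤ Real.exp (-(t^4/4 - κ*t^2/2)) := (Real.exp_pos _).le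
    have hsum : ((t^3 - κ*t) * u t)^2 ≤ 4*((C₁*u t^2 + 4*(deriv u t)^2)
        - ((3*t^2 - κ) * u t^2 + 2*(t^3 - κ*t)*u t*deriv u t
          - (t^3 - κ*t)^2*u t^2)) := by nlinarith [h1, h2]
    calc Real.exp (-(t^4/4 - κ*t^2/2)) * ((t^3 - κ*t) * u t)^2
        ≤ Real.exp (-(t^4/4 - κ*t^2/2)) * (4*((C₁*u t^2 + 4*(deriv u t)^2)
          - ((3*t^2 - κ) * u t^2 + 2*(t^3 - κ*t)*u t*deriv u t
            - (t^3 - κ*t)^2*u t^2))) := mul_le_mul_of_nonneg_left hsum h3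
      _ = 4*((C₁*u t^2 + 4*(deriv u t)^2) * Real.exp (-(t^4/4 - κ*t^2/2))
        - ((3*t^2 - κ) * u t^2 + 2*(t^3 - κ*t)*u t*deriv u t
          - (t^3 - κ*t)^2*u t^2) * Real.exp (-(t^4/4 - κ*t^2/2))) := by ring
  -- main interval bound
  have hmain : ∀ R : ℝ, |κ|+1 ≤ R →
      ∫ t in Set.Ioc (-R) R, Real.exp (-(t^4/4 - κ*t^2/2)) * ((t^3 - κ*t) * u t)^2 ≤ 4*B := by
    intro R hRge
    have hκ0 : (0:ℝ) ≤ |κ| := abs_nonneg κ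
    have hle : -R ≤ R := by linarith
    have hftc : ∫ t in (-R)..R, ((3*t^2 - κ) * u t^2 + 2*(t^3 - κ*t)*u t*deriv u t
        - (t^3 - κ*t)^2*u t^2) * Real.exp (-(t^4/4 - κ*t^2/2))
        = (R^3 - κ*R) * u R^2 * Real.exp (-(R^4/4 - κ*R^2/2))
          - ((-R)^3 - κ*(-R)) * u (-R)^2 * Real.exp (-((-R)^4/4 - κ*(-R)^2/2)) :=
      intervalIntegral.integral_eq_sub_of_hasDerivAt (fun t _ => hFd t) (hF'ii (-R) R)
    have hWR : 0 ≤ R^3 - κ*R := by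
      nlinarith [le_abs_self κ, mul_self_nonneg (R - (|κ|+1))]
    have hFR : 0 ≤ (R^3 - κ*R) * u R^2 * Real.exp (-(R^4/4 - κ*R^2/2)) :=
      mul_nonneg (mul_nonneg hWR (sq_nonneg _)) (Real.exp_pos _).le
    have hWmR : (-R)^3 - κ*(-R) ≤ 0 := by nlinarith [hWR]
    have hFmR : ((-R)^3 - κ*(-R)) * u (-R)^2 * Real.exp (-((-R)^4/4 - κ*(-R)^2/2)) ≤ 0 := by
      have h4 := mul_nonneg (sq_nonneg (u (-R)))
        (Real.exp_pos (-((-R)^4/4 - κ*(-R)^2/2))).le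
      nlinarith [h4, hWmR]
    have hF'int : IntegrableOn (fun t => ((3*t^2 - κ) * u t^2 + 2*(t^3 - κ*t)*u t*deriv u t
        - (t^3 - κ*t)^2*u t^2) * Real.exp (-(t^4/4 - κ*t^2/2))) (Set.Ioc (-R) R) volume :=
      (hF'ii (-R) R).1
    have hf1 : IntegrableOn (fun t => Real.exp (-(t^4/4 - κ*t^2/2)) * ((t^3 - κ*t) * u t)^2)
        (Set.Ioc (-R) R) volume := by
      apply Continuous.integrableOn_Ioc; fun_prop
    have hf2 : IntegrableOn (fun t => 4*((C₁*u t^2 + 4*(deriv u t)^2)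
        * Real.exp (-(t^4/4 - κ*t^2/2))
        - ((3*t^2 - κ) * u t^2 + 2*(t^3 - κ*t)*u t*deriv u t
          - (t^3 - κ*t)^2*u t^2) * Real.exp (-(t^4/4 - κ*t^2/2)))) (Set.Ioc (-R) R) volume :=
      (hBint.integrableOn.sub hF'int).const_mul 4
    have hmono := setIntegral_mono_on hf1 hf2 measurableSet_Ioc (fun t _ => hpt t)
    have hsplit : ∫ t in Set.Ioc (-R) R, 4*((C₁*u t^2 + 4*(deriv u t)^2)
        * Real.exp (-(t^4/4 - κ*t^2/2))
        - ((3*t^2 - κ) * u t^2 + 2*(t^3 - κ*t)*u t*deriv u t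
          - (t^3 - κ*t)^2*u t^2) * Real.exp (-(t^4/4 - κ*t^2/2)))
        = 4*((∫ t in Set.Ioc (-R) R, (C₁*u t^2 + 4*(deriv u t)^2)
          * Real.exp (-(t^4/4 - κ*t^2/2)))
        - ∫ t in Set.Ioc (-R) R, ((3*t^2 - κ) * u t^2 + 2*(t^3 - κ*t)*u t*deriv u t
          - (t^3 - κ*t)^2*u t^2) * Real.exp (-(t^4/4 - κ*t^2/2))) := by
      rw [integral_const_mul, integral_sub hBint.integrableOn hF'int]
    have hgB : ∫ t in Set.Ioc (-R) R, (C₁*u t^2 + 4*(deriv u t)^2)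
        * Real.exp (-(t^4/4 - κ*t^2/2)) ≤ B := by
      refine setIntegral_le_integral hBint (Filter.Eventually.of_forall fun t => ?_)
      positivity
    have hF'0 : 0 ≤ ∫ t in Set.Ioc (-R) R, ((3*t^2 - κ) * u t^2 + 2*(t^3 - κ*t)*u t*deriv u t
        - (t^3 - κ*t)^2*u t^2) * Real.exp (-(t^4/4 - κ*t^2/2)) := by
      rw [← intervalIntegral.integral_of_le hle, hftc]
      linarith
    rw [hsplit] at hmono
    linarith [hmono, hgB, hF'0]
  -- conclude by the improper-integral criterion
  refine integrable_of_intervalIntegral_norm_bounded (μ := volume) (l := Filter.atTop)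
    (a := fun n : ℕ => -(|κ|+1+n)) (b := fun n : ℕ => |κ|+1+n) (4*B) (fun n => ?_) ?_ ?_ ?_
  · apply Continuous.integrableOn_Ioc; fun_prop
  · exact Filter.tendsto_neg_atBot_iff.2
      (Filter.tendsto_atTop_add_const_left _ _ tendsto_natCast_atTop_atTop)
  · exact Filter.tendsto_atTop_add_const_left _ _ tendsto_natCast_atTop_atTop
  · refine Filter.Eventually.of_forall fun n => ?_
    have hκ0 : (0:ℝ) ≤ |κ| := abs_nonneg κ
    have hn : (0:ℝ) ≤ (n:ℝ) := Nat.cast_nonneg n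
    have hle : -(|κ|+1+(n:ℝ)) ≤ |κ|+1+(n:ℝ) := by linarith
    have heqn : ∫ t in -(|κ|+1+(n:ℝ))..(|κ|+1+(n:ℝ)),
        ‖Real.exp (-(t^4/4 - κ*t^2/2)) * ((t^3 - κ*t) * u t)^2‖
        = ∫ t in -(|κ|+1+(n:ℝ))..(|κ|+1+(n:ℝ)),
          Real.exp (-(t^4/4 - κ*t^2/2)) * ((t^3 - κ*t) * u t)^2 := by
      refine intervalIntegral.integral_congr fun t _ => ?_
      exact Real.norm_of_nonneg (by positivity)
    rw [heqn, intervalIntegral.integral_of_le hle]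
    exact hmain _ (by linarith)

end WeightedSup

set_option maxHeartbeats 1000000
open WeightedSup

/-- Weighted `L∞` bound: let `V(x) = x⁴/4 − κx²/2`, `ν = e^{-V}dx/Z`,
`Ju = −V'u + u'`.  If `‖Ju‖_{L²(ν)} ≤ c‖u‖_{H¹(ν)}` for all `u ∈ H¹(ν)`, where
`‖u‖²_{H¹(ν)} = ∫(u')²dν + (∫u dν)²`, and `C_P` is a Poincaré constant, then for all
`u ∈ H¹(ν)`, `‖e^{-V/2}u‖_∞ ≤ √(Z(c+1)) max(1,C_P)^{1/4} ‖u‖_{H¹(ν)}`. -/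
theorem weighted_sup_bound
    (κ : ℝ) (Z : ℝ) (hZ : 0 < Z)
    (V : ℝ → ℝ) (hV : ∀ x, V x = x ^ 4 / 4 - κ * x ^ 2 / 2)
    (ν : Measure ℝ)
    (hν : ν = (volume : Measure ℝ).withDensity
      (fun x => ENNReal.ofReal (Real.exp (-V x) / Z)))
    (hprob : IsProbabilityMeasure ν)
    (c : ℝ)
    (hJ : ∀ u : ℝ → ℝ, H1mem ν u →
      Real.sqrt (∫ x, (-(x ^ 3 - κ * x) * u x + deriv u x) ^ 2 ∂ν) ≤
        c * Real.sqrt ((∫ x, (deriv u x) ^ 2 ∂ν) + (∫ x, u x ∂ν) ^ 2))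
    (CP : ℝ)
    (hCP : ∀ u : ℝ → ℝ, H1mem ν u →
      (∫ x, (u x) ^ 2 ∂ν) - (∫ x, u x ∂ν) ^ 2 ≤ CP * ∫ x, (deriv u x) ^ 2 ∂ν) :
    ∀ u : ℝ → ℝ, H1mem ν u → ∀ x : ℝ,
      |Real.exp (-V x / 2) * u x| ≤
        Real.sqrt (Z * (c + 1)) * (max 1 CP) ^ ((1 : ℝ) / 4) *
          Real.sqrt ((∫ y, (deriv u y) ^ 2 ∂ν) + (∫ y, u y ∂ν) ^ 2) := by
  haveI := hprob
  have hVfun : V = fun x => x ^ 4 / 4 - κ * x ^ 2 / 2 := funext hV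
  subst hVfun
  intro u hu x
  obtain ⟨hud, huL2, hu'L2⟩ := hu
  have hucont : Continuous u := hud.continuous
  have hu'meas : Measurable (deriv u) := measurable_deriv u
  have hρmeas : Measurable (fun t : ℝ => Real.exp (-(t^4/4 - κ*t^2/2))) := by fun_prop
  have hρnn : ∀ t : ℝ, (0:ℝ) ≤ Real.exp (-(t^4/4 - κ*t^2/2)) := fun t => (Real.exp_pos _).le
  have hiν : ∀ f : ℝ → ℝ, ∫ t, f t ∂ν = ∫ t, (Real.exp (-(t^4/4 - κ*t^2/2)) / Z) * f t := by
    intro f; rw [hν]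
    exact integral_dens hρmeas hρnn hZ f
  have hiiν : ∀ f : ℝ → ℝ, Integrable f ν ↔
      Integrable (fun t => (Real.exp (-(t^4/4 - κ*t^2/2)) / Z) * f t) volume := by
    intro f; rw [hν]
    exact integrable_dens hρmeas hρnn hZ f
  have hIvol : ∀ f : ℝ → ℝ, Integrable f ν →
      Integrable (fun t => Real.exp (-(t^4/4 - κ*t^2/2)) * f t) volume := by
    intro f hf
    refine (((hiiν f).1 hf).const_mul Z).congr (Filter.Eventually.of_forall fun t => ?_)
    field_simp
  have hZint : ∀ f : ℝ → ℝ,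
      ∫ t, Real.exp (-(t^4/4 - κ*t^2/2)) * f t = Z * ∫ t, f t ∂ν := by
    intro f
    rw [hiν f, ← integral_const_mul]
    refine integral_congr_ae (Filter.Eventually.of_forall fun t => ?_)
    field_simp
  -- basic integrability
  have hu2ν : Integrable (fun t => u t^2) ν :=
    (memLp_two_iff_integrable_sq hucont.aestronglyMeasurable).1 huL2
  have hu'2ν : Integrable (fun t => (deriv u t)^2) ν :=
    (memLp_two_iff_integrable_sq hu'meas.aestronglyMeasurable).1 hu'L2
  have hρu2 : Integrable (fun t => Real.exp (-(t^4/4 - κ*t^2/2)) * u t^2) volume :=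
    hIvol _ hu2ν
  have hρu'2 : Integrable (fun t => Real.exp (-(t^4/4 - κ*t^2/2)) * (deriv u t)^2) volume :=
    hIvol _ hu'2ν
  have hu'loc : ∀ a b : ℝ, IntervalIntegrable (deriv u) volume a b :=
    loc_l1 (by fun_prop) (fun t => Real.exp_pos _) hu'meas hρu'2
  have hWint := key_integrable κ u hud hρu2 hρu'2 hu'loc
  have hWu2ν : Integrable (fun t => ((t^3 - κ*t) * u t)^2) ν := by
    refine (hiiν _).2 ?_
    refine (hWint.const_mul (1/Z)).congr (Filter.Eventually.of_forall fun t => ?_)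
    ring
  have hWuL2 : MemLp (fun t => (t^3 - κ*t) * u t) 2 ν :=
    (memLp_two_iff_integrable_sq
      ((by fun_prop : Continuous fun t : ℝ => (t^3-κ*t)*u t).aestronglyMeasurable)).2 hWu2ν
  -- c is nonnegative
  have hc0 : 0 ≤ c := by
    have h1 : H1mem ν (fun _ => (1:ℝ)) :=
      ⟨differentiable_const 1, memLp_const 1, by rw [deriv_const']; exact memLp_const 0⟩
    have h2 := hJ _ h1
    have h3 : ((∫ x, (deriv (fun _ : ℝ => (1:ℝ)) x)^2 ∂ν) + (∫ x, (1:ℝ) ∂ν)^2) = 1 := by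
      rw [deriv_const']
      simp
    rw [h3, Real.sqrt_one, mul_one] at h2
    exact le_trans (Real.sqrt_nonneg _) h2
  -- apply the main hypotheses to u
  have hJu := hJ u ⟨hud, huL2, hu'L2⟩
  have hCPu := hCP u ⟨hud, huL2, hu'L2⟩
  set Ia : ℝ := ∫ t, (-(t^3-κ*t)*u t + deriv u t)^2 ∂ν with hIa
  set Ib : ℝ := ∫ t, (deriv u t)^2 ∂ν with hIb
  set Iu : ℝ := ∫ t, u t ∂ν with hIu
  set Iuu : ℝ := ∫ t, u t^2 ∂ν with hIuu
  have hIa0 : 0 ≤ Ia := integral_nonneg fun t => sq_nonneg _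
  have hIb0 : 0 ≤ Ib := integral_nonneg fun t => sq_nonneg _
  have hIuu0 : 0 ≤ Iuu := integral_nonneg fun t => sq_nonneg _
  have hE0 : 0 ≤ Ib + Iu^2 := add_nonneg hIb0 (sq_nonneg _)
  clear_value Ia Ib Iu Iuu
  -- L² membership of Ju and h = Ju + u'
  have haL2 : MemLp (fun t => -(t^3-κ*t)*u t + deriv u t) 2 ν := by
    have h0 := (hWuL2.neg).add hu'L2
    have heq : (-(fun t : ℝ => (t^3-κ*t)*u t) + deriv u)
        = fun t => -(t^3-κ*t)*u t + deriv u t := by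
      funext t; simp only [Pi.add_apply, Pi.neg_apply]; ring
    exact heq ▸ h0
  have hhL2 : MemLp (fun t => (-(t^3-κ*t)*u t + deriv u t) + deriv u t) 2 ν := by
    have h0 := haL2.add hu'L2
    have heq : ((fun t : ℝ => -(t^3-κ*t)*u t + deriv u t) + deriv u)
        = fun t => (-(t^3-κ*t)*u t + deriv u t) + deriv u t := by
      funext t; simp only [Pi.add_apply]
    exact heq ▸ h0
  have ha2ν : Integrable (fun t => (-(t^3-κ*t)*u t + deriv u t)^2) ν :=
    (memLp_two_iff_integrable_sq haL2.1).1 haL2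
  have hameas : Measurable (fun t => -(t^3-κ*t)*u t + deriv u t) :=
    ((by fun_prop : Continuous fun t : ℝ => -(t^3-κ*t)*u t).measurable).add hu'meas
  have habInt : Integrable (fun t => (-(t^3-κ*t)*u t + deriv u t) * deriv u t) ν := by
    refine Integrable.mono'
      (g := fun t => (1/2)*(-(t^3-κ*t)*u t + deriv u t)^2 + (1/2)*(deriv u t)^2)
      ((ha2ν.const_mul (1/2)).add (hu'2ν.const_mul (1/2)))
      (hameas.mul hu'meas).aestronglyMeasurable
      (Filter.Eventually.of_forall fun t => ?_)
    rw [Real.norm_eq_abs, abs_mul]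
    nlinarith [sq_nonneg (|(-(t^3-κ*t)*u t + deriv u t)| - |deriv u t|),
      sq_abs (-(t^3-κ*t)*u t + deriv u t), sq_abs (deriv u t)]
  have hab_le : ∫ t, (-(t^3-κ*t)*u t + deriv u t) * deriv u t ∂ν
      ≤ Real.sqrt Ia * Real.sqrt Ib := by
    have hcs := cs haL2 hu'L2
    rw [← hIa, ← hIb] at hcs
    refine le_trans (integral_mono habInt
      (habInt.abs.congr (Filter.Eventually.of_forall fun t => abs_mul _ _))
      (fun t => le_trans (le_abs_self _) (le_of_eq (abs_mul _ _)))) hcs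
  -- Minkowski-type bound for h
  have hIh_le : ∫ t, ((-(t^3-κ*t)*u t + deriv u t) + deriv u t)^2 ∂ν
      ≤ ((c+1)*Real.sqrt (Ib + Iu^2))^2 := by
    have hexp : (fun t => ((-(t^3-κ*t)*u t + deriv u t) + deriv u t)^2)
        = fun t => (-(t^3-κ*t)*u t + deriv u t)^2
          + 2*((-(t^3-κ*t)*u t + deriv u t) * deriv u t) + (deriv u t)^2 := by
      funext t; ring
    have hi1 : Integrable (fun t => (-(t^3-κ*t)*u t + deriv u t)^2
        + 2*((-(t^3-κ*t)*u t + deriv u t) * deriv u t)) ν := ha2ν.add (habInt.const_mul 2)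
    rw [hexp, integral_add hi1 hu'2ν,
      integral_add ha2ν (habInt.const_mul 2), integral_const_mul, ← hIa, ← hIb]
    have s1 : Real.sqrt Ia ^ 2 = Ia := Real.sq_sqrt hIa0
    have s2 : Real.sqrt Ib ^ 2 = Ib := Real.sq_sqrt hIb0
    have sE : Real.sqrt (Ib + Iu^2) ^ 2 = Ib + Iu^2 := Real.sq_sqrt hE0
    have hsqrtIb : Real.sqrt Ib ≤ Real.sqrt (Ib + Iu^2) :=
      Real.sqrt_le_sqrt (by nlinarith [sq_nonneg Iu])
    have p1 : Real.sqrt Ia * Real.sqrt Ib ≤ (c*Real.sqrt (Ib+Iu^2)) * Real.sqrt (Ib+Iu^2) :=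
      mul_le_mul hJu hsqrtIb (Real.sqrt_nonneg _) (mul_nonneg hc0 (Real.sqrt_nonneg _))
    have p2 : Real.sqrt Ia * Real.sqrt Ia ≤ (c*Real.sqrt (Ib+Iu^2)) * (c*Real.sqrt (Ib+Iu^2)) :=
      mul_le_mul hJu hJu (Real.sqrt_nonneg _) (mul_nonneg hc0 (Real.sqrt_nonneg _))
    have p3 : Real.sqrt Ib * Real.sqrt Ib ≤ Real.sqrt (Ib+Iu^2) * Real.sqrt (Ib+Iu^2) :=
      mul_le_mul hsqrtIb hsqrtIb (Real.sqrt_nonneg _) (Real.sqrt_nonneg _)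
    nlinarith [p1, p2, p3, s1, s2, sE, hab_le]
  have hsqrtIh : Real.sqrt (∫ t, ((-(t^3-κ*t)*u t + deriv u t) + deriv u t)^2 ∂ν)
      ≤ (c+1)*Real.sqrt (Ib + Iu^2) := by
    have h := Real.sqrt_le_sqrt hIh_le
    rwa [Real.sqrt_sq (by positivity : (0:ℝ) ≤ (c+1)*Real.sqrt (Ib+Iu^2))] at h
  -- Poincaré bound
  have hu2b : Iuu ≤ max 1 CP * (Ib + Iu^2) := by
    nlinarith [mul_le_mul_of_nonneg_right (le_max_right 1 CP) hIb0,
      mul_le_mul_of_nonneg_right (le_max_left 1 CP) (sq_nonneg Iu), hCPu]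
  have hsqu : Real.sqrt Iuu ≤ Real.sqrt (max 1 CP) * Real.sqrt (Ib + Iu^2) := by
    rw [← Real.sqrt_mul (le_trans zero_le_one (le_max_left 1 CP))]
    exact Real.sqrt_le_sqrt hu2b
  -- the weighted square function g and its derivative
  have hgd : ∀ t : ℝ, HasDerivAt (fun y => Real.exp (-(y^4/4 - κ*y^2/2)) * u y^2)
      (Real.exp (-(t^4/4 - κ*t^2/2))
        * (u t * ((-(t^3-κ*t)*u t + deriv u t) + deriv u t))) t := by
    intro t
    have h1 := (rho_hasDeriv κ t).mul ((hud t).hasDerivAt.pow 2)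
    refine h1.congr_deriv ?_
    simp only [Pi.mul_apply, Pi.pow_apply]; push_cast; ring
  have hg'meas : Measurable (fun t => Real.exp (-(t^4/4 - κ*t^2/2))
      * (u t * ((-(t^3-κ*t)*u t + deriv u t) + deriv u t))) := by
    apply hρmeas.mul
    apply hucont.measurable.mul
    exact (((by fun_prop :
      Continuous fun t : ℝ => -(t^3-κ*t)*u t).measurable).add hu'meas).add hu'meas
  have hg'int : Integrable (fun t => Real.exp (-(t^4/4 - κ*t^2/2))
      * (u t * ((-(t^3-κ*t)*u t + deriv u t) + deriv u t))) volume := by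
    refine Integrable.mono'
      (g := fun t => (1/2)*(Real.exp (-(t^4/4 - κ*t^2/2)) * u t^2)
        + (Real.exp (-(t^4/4 - κ*t^2/2)) * ((t^3-κ*t)*u t)^2
          + 4*(Real.exp (-(t^4/4 - κ*t^2/2)) * (deriv u t)^2)))
      ((hρu2.const_mul (1/2)).add (hWint.add (hρu'2.const_mul 4)))
      hg'meas.aestronglyMeasurable
      (Filter.Eventually.of_forall fun t => ?_)
    rw [Real.norm_eq_abs, abs_mul, abs_of_pos (Real.exp_pos _)]
    have hb : |u t * ((-(t^3-κ*t)*u t + deriv u t) + deriv u t)|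
        ≤ (1/2)*u t^2 + ((t^3-κ*t)*u t)^2 + 4*(deriv u t)^2 := by
      refine abs_le.2 ⟨?_, ?_⟩
      · nlinarith [sq_nonneg (u t - (t^3-κ*t)*u t + 2*deriv u t),
          sq_nonneg ((t^3-κ*t)*u t + 2*deriv u t)]
      · nlinarith [sq_nonneg (u t + (t^3-κ*t)*u t - 2*deriv u t),
          sq_nonneg ((t^3-κ*t)*u t + 2*deriv u t)]
    calc Real.exp (-(t^4/4 - κ*t^2/2))
          * |u t * ((-(t^3-κ*t)*u t + deriv u t) + deriv u t)|
        ≤ Real.exp (-(t^4/4 - κ*t^2/2))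
          * ((1/2)*u t^2 + ((t^3-κ*t)*u t)^2 + 4*(deriv u t)^2) :=
        mul_le_mul_of_nonneg_left hb (hρnn t)
      _ = (1/2)*(Real.exp (-(t^4/4 - κ*t^2/2)) * u t^2)
        + (Real.exp (-(t^4/4 - κ*t^2/2)) * ((t^3-κ*t)*u t)^2
          + 4*(Real.exp (-(t^4/4 - κ*t^2/2)) * (deriv u t)^2)) := by ring
  have hgx : Real.exp (-(x^4/4 - κ*x^2/2)) * u x^2 ≤ ∫ t, |Real.exp (-(t^4/4 - κ*t^2/2))
      * (u t * ((-(t^3-κ*t)*u t + deriv u t) + deriv u t))| :=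
    sup_bound hgd hρu2 hg'int x
  -- rewrite the integral over the line as a ν-integral
  have e2 : ∫ t, |Real.exp (-(t^4/4 - κ*t^2/2))
      * (u t * ((-(t^3-κ*t)*u t + deriv u t) + deriv u t))|
      = Z * ∫ t, |u t * ((-(t^3-κ*t)*u t + deriv u t) + deriv u t)| ∂ν := by
    have eabs : (fun t => |Real.exp (-(t^4/4 - κ*t^2/2))
        * (u t * ((-(t^3-κ*t)*u t + deriv u t) + deriv u t))|)
        = fun t => Real.exp (-(t^4/4 - κ*t^2/2))
          * |u t * ((-(t^3-κ*t)*u t + deriv u t) + deriv u t)| := by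
      funext t; rw [abs_mul, abs_of_pos (Real.exp_pos _)]
    rw [eabs, hZint (fun t => |u t * ((-(t^3-κ*t)*u t + deriv u t) + deriv u t)|)]
  have m0 : ∫ t, |u t * ((-(t^3-κ*t)*u t + deriv u t) + deriv u t)| ∂ν
      = ∫ t, |u t| * |(-(t^3-κ*t)*u t + deriv u t) + deriv u t| ∂ν :=
    integral_congr_ae (Filter.Eventually.of_forall fun t => abs_mul _ _)
  have m1 : ∫ t, |u t| * |(-(t^3-κ*t)*u t + deriv u t) + deriv u t| ∂ν
      ≤ Real.sqrt Iuu
        * Real.sqrt (∫ t, ((-(t^3-κ*t)*u t + deriv u t) + deriv u t)^2 ∂ν) := by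
    have h := cs huL2 hhL2
    rwa [← hIuu] at h
  have m4 : ∫ t, |u t * ((-(t^3-κ*t)*u t + deriv u t) + deriv u t)| ∂ν
      ≤ (Real.sqrt (max 1 CP) * Real.sqrt (Ib + Iu^2)) * ((c+1)*Real.sqrt (Ib + Iu^2)) := by
    rw [m0]
    refine le_trans m1 (mul_le_mul hsqu hsqrtIh (Real.sqrt_nonneg _) (by positivity))
  have hfinal : Real.exp (-(x^4/4 - κ*x^2/2)) * u x^2
      ≤ Z*(c+1)*Real.sqrt (max 1 CP)*(Ib + Iu^2) := by
    have step := le_trans hgx (le_of_eq e2)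
    have step2 := le_trans step (mul_le_mul_of_nonneg_left m4 hZ.le)
    have hEE : Real.sqrt (Ib + Iu^2) * Real.sqrt (Ib + Iu^2) = Ib + Iu^2 :=
      Real.mul_self_sqrt hE0
    have heq2 : Z * (Real.sqrt (max 1 CP) * Real.sqrt (Ib + Iu^2)
        * ((c+1)*Real.sqrt (Ib + Iu^2))) = Z*(c+1)*Real.sqrt (max 1 CP)*(Ib + Iu^2) := by
      linear_combination (Z*(c+1)*Real.sqrt (max 1 CP)) * hEE
    linarith [step2, heq2.le, heq2.ge]
  -- conclude
  have habs : |Real.exp (-(x^4/4 - κ*x^2/2)/2) * u x|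
      = Real.sqrt (Real.exp (-(x^4/4 - κ*x^2/2)) * u x^2) := by
    rw [← Real.sqrt_sq_eq_abs]
    congr 1
    rw [mul_pow, sq, ← Real.exp_add]
    congr 2
    ring
  rw [habs]
  have hmax0 : (0:ℝ) ≤ max 1 CP := le_trans zero_le_one (le_max_left 1 CP)
  have h14 : Real.sqrt (Real.sqrt (max 1 CP)) = (max 1 CP) ^ ((1:ℝ)/4) := by
    rw [Real.sqrt_eq_rpow, Real.sqrt_eq_rpow, ← Real.rpow_mul hmax0]
    norm_num
  refine le_trans (Real.sqrt_le_sqrt hfinal) (le_of_eq ?_)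
  rw [show Z*(c+1)*Real.sqrt (max 1 CP)*(Ib + Iu^2)
      = (Z*(c+1)) * (Real.sqrt (max 1 CP) * (Ib + Iu^2)) from by ring,
    Real.sqrt_mul (mul_nonneg hZ.le (by linarith)),
    Real.sqrt_mul (Real.sqrt_nonneg _), h14]
  ring
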